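/- arXiv:1103.4351 — 2 statements merged into one kernel-verified Lean document; each statement's English description precedes it below -/
import Mathlib

section
/- For n > 3, any automorphism of FQ_n that fixes a vertex v and fixes every neighbor of v is the identity automorphism. -/
/-- The folded hypercube: vertices are elements of `Z_2^n`; two vertices are adjacent
iff they differ in exactly one coordinate or in all `n` coordinates. -/
def FQ (n : ℕ) : SimpleGraph (Fin n → ZMod 2) :=
  SimpleGraph.fromRel (fun x y => (∃ i, y = x + Pi.single i 1) ∨ y = x + 1)

lemma addself {n : ℕ} (s : Fin n → ZMod 2) : s + s = 0 := by
  funext m; exact CharTwo.add_self_eq_zero _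

lemma adj_iff {n : ℕ} {x y : Fin n → ZMod 2} :
    (FQ n).Adj x y ↔ x ≠ y ∧ ((∃ i, y = x + Pi.single i 1) ∨ y = x + 1) := by
  rw [FQ, SimpleGraph.fromRel_adj]
  constructor
  · rintro ⟨h, (h2 | ⟨⟨i, rfl⟩ | rfl⟩)⟩
    · exact ⟨h, h2⟩
    · exact ⟨h, Or.inl ⟨i, by rw [add_assoc, addself, add_zero]⟩⟩
    · exact ⟨h, Or.inr (by rw [add_assoc, addself, add_zero])⟩
  · rintro ⟨h, h2⟩; exact ⟨h, Or.inl h2⟩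

lemma exists_out {n : ℕ} (hn : 3 < n) (i j k : Fin n) : ∃ m : Fin n, m ≠ i ∧ m ≠ j ∧ m ≠ k := by
  have hcard : ({i, j, k} : Finset (Fin n)).card ≤ 3 :=
    (Finset.card_insert_le _ _).trans (Nat.succ_le_succ
      ((Finset.card_insert_le _ _).trans (Nat.succ_le_succ (by simp))))
  have h : 0 < (({i, j, k} : Finset (Fin n))ᶜ).card := by
    rw [Finset.card_compl, Fintype.card_fin]; omega
  obtain ⟨m, hm⟩ := Finset.card_pos.mp h
  rw [Finset.mem_compl] at hm
  simp only [Finset.mem_insert, Finset.mem_singleton, not_or] at hm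
  exact ⟨m, hm.1, hm.2.1, hm.2.2⟩

lemma single_ne_zero' {n : ℕ} (i : Fin n) : (Pi.single i 1 : Fin n → ZMod 2) ≠ 0 := by
  intro hc
  have := congrFun hc i
  simp [Pi.single_apply] at this

lemma one_ne_zero_pi {n : ℕ} (hn : 3 < n) : (1 : Fin n → ZMod 2) ≠ 0 := by
  intro hc
  have := congrFun hc ⟨0, by omega⟩
  simp at this

lemma single_add_one_ne_zero {n : ℕ} (hn : 3 < n) (i : Fin n) :
    (Pi.single i 1 : Fin n → ZMod 2) + 1 ≠ 0 := by
  obtain ⟨m, hm, -, -⟩ := exists_out hn i i i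
  intro hc
  have := congrFun hc m
  simp [Pi.single_apply, hm] at this

lemma single_add_single_ne_zero {n : ℕ} {i j : Fin n} (h : i ≠ j) :
    (Pi.single i 1 : Fin n → ZMod 2) + Pi.single j 1 ≠ 0 := by
  intro hc
  have := congrFun hc i
  simp [Pi.single_apply, h, Ne.symm h] at this

lemma ne_of_add {n : ℕ} {s : Fin n → ZMod 2} (hs : s ≠ 0) (x : Fin n → ZMod 2) :
    x ≠ x + s := by
  intro hc
  apply hs
  have : x + 0 = x + s := by rw [add_zero]; exact hc
  exact (add_right_inj x).mp this |>.symm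

lemma single_inj {n : ℕ} {i j : Fin n} (h : (Pi.single i 1 : Fin n → ZMod 2) = Pi.single j 1) : i = j := by
  by_contra hij
  have := congrFun h i
  simp [Pi.single_apply, hij] at this

lemma three_single_ne_one {n : ℕ} (hn : 3 < n) (i j k : Fin n) :
    (Pi.single i 1 : Fin n → ZMod 2) + Pi.single j 1 + Pi.single k 1 ≠ 1 := by
  obtain ⟨m, h1, h2, h3⟩ := exists_out hn i j k
  intro hc
  have := congrFun hc m
  simp [Pi.single_apply, h1, h2, h3] at this

lemma commonA {n : ℕ} (hn : 3 < n) (x z : Fin n → ZMod 2) {i j : Fin n} (hij : i ≠ j)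
    (h1 : (∃ k, z = (x + Pi.single i 1) + Pi.single k 1) ∨ z = (x + Pi.single i 1) + 1)
    (h2 : (∃ l, z = (x + Pi.single j 1) + Pi.single l 1) ∨ z = (x + Pi.single j 1) + 1) :
    z = x ∨ z = x + Pi.single i 1 + Pi.single j 1 := by
  rcases h1 with ⟨k, hk⟩ | hk <;> rcases h2 with ⟨l, hl⟩ | hl
  · have key : (Pi.single i 1 : Fin n → ZMod 2) + Pi.single k 1 = Pi.single j 1 + Pi.single l 1 := by
      have h := hk.symm.trans hl
      rwa [add_assoc, add_assoc, add_right_inj] at h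
    by_cases hki : k = i
    · left; rw [hk, hki, add_assoc, addself, add_zero]
    · have hli : l = i := by
        by_contra hli
        have := congrFun key i
        simp [Pi.single_apply, Ne.symm hki, Ne.symm hij] at this
        exact hli this.symm
      have hkj : k = j := by
        apply single_inj
        have : (Pi.single i 1 : Fin n → ZMod 2) + Pi.single k 1 = Pi.single i 1 + Pi.single j 1 := by
          rw [key, hli, add_comm]
        rwa [add_right_inj] at this
      right; rw [hk, hkj]
  · exfalso
    have key : (Pi.single i 1 : Fin n → ZMod 2) + Pi.single k 1 = Pi.single j 1 + 1 := by
      have h := hk.symm.trans hl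
      rwa [add_assoc, add_assoc, add_right_inj] at h
    apply three_single_ne_one hn i k j
    rw [key, add_comm _ (1 : Fin n → ZMod 2), add_assoc, addself, add_zero]
  · exfalso
    have key : (Pi.single i 1 : Fin n → ZMod 2) + 1 = Pi.single j 1 + Pi.single l 1 := by
      have h := hk.symm.trans hl
      rwa [add_assoc, add_assoc, add_right_inj] at h
    apply three_single_ne_one hn j l i
    rw [← key, add_comm, ← add_assoc, addself, zero_add]
  · exfalso
    have key : (Pi.single i 1 : Fin n → ZMod 2) + 1 = Pi.single j 1 + 1 := by
      have h := hk.symm.trans hl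
      rwa [add_assoc, add_assoc, add_right_inj] at h
    rw [add_left_inj] at key
    exact hij (single_inj key)

lemma commonB {n : ℕ} (hn : 3 < n) (x z : Fin n → ZMod 2) (i : Fin n)
    (h1 : (∃ k, z = (x + Pi.single i 1) + Pi.single k 1) ∨ z = (x + Pi.single i 1) + 1)
    (h2 : (∃ l, z = (x + 1) + Pi.single l 1) ∨ z = (x + 1) + 1) :
    z = x ∨ z = x + Pi.single i 1 + 1 := by
  rcases h2 with ⟨l, hl⟩ | hl
  · rcases h1 with ⟨k, hk⟩ | hk
    · exfalso
      have key : (Pi.single i 1 : Fin n → ZMod 2) + Pi.single k 1 = 1 + Pi.single l 1 := by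
        have h := hk.symm.trans hl
        rwa [add_assoc, add_assoc, add_right_inj] at h
      apply three_single_ne_one hn i k l
      rw [key, add_assoc, addself, add_zero]
    · have key : (Pi.single i 1 : Fin n → ZMod 2) + 1 = 1 + Pi.single l 1 := by
        have h := hk.symm.trans hl
        rwa [add_assoc, add_assoc, add_right_inj] at h
      have hli : (Pi.single i 1 : Fin n → ZMod 2) = Pi.single l 1 := by
        rw [add_comm] at key
        rwa [add_right_inj] at key
      right; rw [hl, ← hli, add_assoc, add_comm (1 : Fin n → ZMod 2), ← add_assoc]
  · left; rw [hl, add_assoc, addself, add_zero]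

/-- the key step lemma -/
lemma step_lemma {n : ℕ} (hn : 3 < n) (φ : FQ n ≃g FQ n) {x y : Fin n → ZMod 2}
    (hP : φ x = x ∧ ∀ w, (FQ n).Adj x w → φ w = w) (hxy : (FQ n).Adj x y) :
    φ y = y ∧ ∀ w, (FQ n).Adj y w → φ w = w := by
  obtain ⟨hx, hxN⟩ := hP
  refine ⟨hxN y hxy, ?_⟩
  intro w hw
  -- helper: a fixed vertex adjacent to w forces forms on φ w
  have forms : ∀ a : Fin n → ZMod 2, φ a = a → (FQ n).Adj a w →
      (∃ k, φ w = a + Pi.single k 1) ∨ φ w = a + 1 := by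
    intro a ha haw
    have : (FQ n).Adj a (φ w) := by
      have := φ.map_adj_iff.mpr haw
      rwa [ha] at this
    exact (adj_iff.mp this).2
  have hinj : ∀ z, φ z = x → φ z = z := by
    intro z hz
    have : z = x := φ.injective (hz.trans hx.symm)
    rw [hz, this]
  rcases adj_iff.mp hxy with ⟨hnexy, (⟨i, rfl⟩ | rfl)⟩
  · -- y = x + e i
    rcases adj_iff.mp hw with ⟨hneyw, (⟨j, hwj⟩ | hw1)⟩
    · -- w = x + e i + e j
      by_cases hji : j = i
      · have hwx : w = x := by rw [hwj, hji, add_assoc, addself, add_zero]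
        apply hinj
        rw [hwx, hx]
      · have hij : i ≠ j := fun h => hji h.symm
        have ha : φ (x + Pi.single i 1) = x + Pi.single i 1 :=
          hxN _ (adj_iff.mpr ⟨ne_of_add (single_ne_zero' i) x, Or.inl ⟨i, rfl⟩⟩)
        have hb : φ (x + Pi.single j 1) = x + Pi.single j 1 :=
          hxN _ (adj_iff.mpr ⟨ne_of_add (single_ne_zero' j) x, Or.inl ⟨j, rfl⟩⟩)
        have hwb : w = (x + Pi.single j 1) + Pi.single i 1 := by
          rw [hwj, add_assoc, add_comm (Pi.single i 1), ← add_assoc]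
        have haw : (FQ n).Adj (x + Pi.single i 1) w :=
          adj_iff.mpr ⟨hneyw, Or.inl ⟨j, hwj⟩⟩
        have hbw : (FQ n).Adj (x + Pi.single j 1) w := by
          apply adj_iff.mpr
          refine ⟨?_, Or.inl ⟨i, hwb⟩⟩
          rw [hwb]
          exact ne_of_add (single_ne_zero' i) _
        rcases commonA hn x (φ w) hij (forms _ ha haw) (forms _ hb hbw) with h | h
        · exact hinj w h
        · rw [h, ← hwj]
    · -- w = x + e i + 1
      have ha : φ (x + Pi.single i 1) = x + Pi.single i 1 :=
        hxN _ (adj_iff.mpr ⟨ne_of_add (single_ne_zero' i) x, Or.inl ⟨i, rfl⟩⟩)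
      have hb : φ (x + 1) = x + 1 :=
        hxN _ (adj_iff.mpr ⟨ne_of_add (one_ne_zero_pi hn) x, Or.inr rfl⟩)
      have hwb : w = (x + 1) + Pi.single i 1 := by
        rw [hw1, add_assoc, add_comm (Pi.single i 1), ← add_assoc]
      have haw : (FQ n).Adj (x + Pi.single i 1) w :=
        adj_iff.mpr ⟨hneyw, Or.inr hw1⟩
      have hbw : (FQ n).Adj (x + 1) w := by
        apply adj_iff.mpr
        refine ⟨?_, Or.inl ⟨i, hwb⟩⟩
        rw [hwb]
        exact ne_of_add (single_ne_zero' i) _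
      rcases commonB hn x (φ w) i (forms _ ha haw) (forms _ hb hbw) with h | h
      · exact hinj w h
      · rw [h, ← hw1]
  · -- y = x + 1
    rcases adj_iff.mp hw with ⟨hneyw, (⟨j, hwj⟩ | hw1)⟩
    · -- w = x + 1 + e j
      have ha : φ (x + Pi.single j 1) = x + Pi.single j 1 :=
        hxN _ (adj_iff.mpr ⟨ne_of_add (single_ne_zero' j) x, Or.inl ⟨j, rfl⟩⟩)
      have hb : φ (x + 1) = x + 1 :=
        hxN _ (adj_iff.mpr ⟨ne_of_add (one_ne_zero_pi hn) x, Or.inr rfl⟩)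
      have hwa : w = (x + Pi.single j 1) + 1 := by
        rw [hwj, add_assoc, add_comm (1 : Fin n → ZMod 2), ← add_assoc]
      have haw : (FQ n).Adj (x + Pi.single j 1) w := by
        apply adj_iff.mpr
        refine ⟨?_, Or.inr hwa⟩
        rw [hwa]
        exact ne_of_add (one_ne_zero_pi hn) _
      have hbw : (FQ n).Adj (x + 1) w :=
        adj_iff.mpr ⟨hneyw, Or.inl ⟨j, hwj⟩⟩
      rcases commonB hn x (φ w) j (forms _ ha haw) (forms _ hb hbw) with h | h
      · exact hinj w h
      · rw [h, ← hwa]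
    · -- w = x + 1 + 1 = x
      apply hinj
      rw [hw1, add_assoc, addself, add_zero, hx]

theorem fq_fix_closed_neighborhood_eq_id (n : ℕ) (hn : 3 < n)
    (φ : FQ n ≃g FQ n) (v : Fin n → ZMod 2) (hv : φ v = v)
    (hN : ∀ w, (FQ n).Adj v w → φ w = w) :
    ∀ x, φ x = x := by
  have zmod2 : ∀ a b : ZMod 2, a ≠ b → a + 1 = b := by decide
  have key : ∀ d : ℕ, ∀ u : Fin n → ZMod 2,
      (Finset.filter (fun m => u m ≠ v m) Finset.univ).card ≤ d →
      (φ u = u ∧ ∀ w, (FQ n).Adj u w → φ w = w) := by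
    intro d
    induction d with
    | zero =>
      intro u hu
      have huv : u = v := by
        funext m
        by_contra hm
        have : m ∈ Finset.filter (fun m => u m ≠ v m) Finset.univ := by
          simp [hm]
        have := Finset.card_pos.mpr ⟨m, this⟩
        omega
      rw [huv]; exact ⟨hv, hN⟩
    | succ d ih =>
      intro u hu
      by_cases h : ∃ m, u m ≠ v m
      · obtain ⟨m, hm⟩ := h
        set u' := u + Pi.single m 1 with hu'def
        have hfilter : Finset.filter (fun k => u' k ≠ v k) Finset.univ =
            (Finset.filter (fun k => u k ≠ v k) Finset.univ).erase m := by
          ext k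
          simp only [Finset.mem_filter, Finset.mem_univ, true_and, Finset.mem_erase]
          by_cases hkm : k = m
          · subst hkm
            simp only [hu'def, Pi.add_apply, Pi.single_apply, if_pos rfl]
            constructor
            · intro hc; exact absurd (zmod2 _ _ hm) hc
            · intro hc; exact absurd rfl hc.1
          · simp only [hu'def, Pi.add_apply, Pi.single_apply, if_neg hkm, add_zero]
            tauto
        have hmem : m ∈ Finset.filter (fun k => u k ≠ v k) Finset.univ := by simp [hm]
        have hcard : (Finset.filter (fun k => u' k ≠ v k) Finset.univ).card ≤ d := by
          rw [hfilter, Finset.card_erase_of_mem hmem]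
          omega
        have hQ' := ih u' hcard
        have hadj : (FQ n).Adj u' u := by
          apply adj_iff.mpr
          constructor
          · rw [hu'def]
            intro hc
            have := congrFun hc m
            simp [Pi.single_apply] at this
          · left
            exact ⟨m, by rw [hu'def, add_assoc, addself, add_zero]⟩
        exact step_lemma hn φ hQ' hadj
      · push_neg at h
        have huv : u = v := funext h
        rw [huv]; exact ⟨hv, hN⟩
  intro x
  exact (key _ x le_rfl).1
end

section
/- For n > 3, the automorphism group of the folded hypercube FQ_n has order exactly (n+1)! · 2^n. -/
namespace FQaux

abbrev V (n : ℕ) := Fin n → ZMod 2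

def fv (n : ℕ) : Fin (n+1) → V n :=
  fun k => Fin.lastCases 1 (fun i => Pi.single i 1) k

variable {n : ℕ}

lemma fv_castSucc (i : Fin n) : fv n i.castSucc = Pi.single i 1 := by simp [fv]

lemma fv_last : fv n (Fin.last n) = 1 := by simp [fv]

lemma two_eq_zero (x : V n) : x + x = 0 := by
  funext j
  have : ∀ a : ZMod 2, a + a = 0 := by decide
  simp [this]

lemma add_cancel_left {x y : V n} : x + (x + y) = y := by
  rw [← add_assoc, two_eq_zero, zero_add]

lemma eq_of_add_eq_zero {x y : V n} (h : x + y = 0) : x = y := by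
  have := congrArg (x + ·) h
  simpa [add_cancel_left] using this.symm

lemma add_eq_iff {x y s : V n} : y = x + s ↔ x + y = s := by
  constructor
  · rintro rfl; exact add_cancel_left
  · rintro rfl; exact add_cancel_left.symm

lemma single_ne_zero (i : Fin n) : (Pi.single i 1 : V n) ≠ 0 := by
  intro h
  have := congrFun h i
  simp at this

lemma single_injective {i j : Fin n} (h : (Pi.single i 1 : V n) = Pi.single j 1) :
    i = j := by
  by_contra hij
  have := congrFun h i
  rw [Pi.single_eq_same, Pi.single_eq_of_ne hij] at this
  exact one_ne_zero this

lemma one_ne_zero_V (hn : 0 < n) : (1 : V n) ≠ 0 := by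
  intro h
  have := congrFun h ⟨0, hn⟩
  simp at this

lemma fv_ne_zero (hn : 0 < n) (k : Fin (n+1)) : fv n k ≠ 0 := by
  induction k using Fin.lastCases with
  | last => rw [fv_last]; exact one_ne_zero_V hn
  | cast i => rw [fv_castSucc]; exact single_ne_zero i

lemma single_ne_one (hn : 1 < n) (i : Fin n) : (Pi.single i 1 : V n) ≠ 1 := by
  intro h
  have : Nontrivial (Fin n) := Fin.nontrivial_iff_two_le.mpr hn
  obtain ⟨j, hj⟩ := exists_ne i
  have := congrFun h j
  rw [Pi.single_eq_of_ne hj] at this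
  simp at this

lemma fv_injective (hn : 1 < n) : Function.Injective (fv n) := by
  intro k l h
  induction k using Fin.lastCases with
  | last =>
    induction l using Fin.lastCases with
    | last => rfl
    | cast j => rw [fv_last, fv_castSucc] at h; exact absurd h.symm (single_ne_one hn j)
  | cast i =>
    induction l using Fin.lastCases with
    | last => rw [fv_last, fv_castSucc] at h; exact absurd h (single_ne_one hn i)
    | cast j => rw [fv_castSucc, fv_castSucc] at h
                exact congrArg Fin.castSucc (single_injective h)

lemma adj_iff (hn : 0 < n) {x y : V n} :
    (FQ n).Adj x y ↔ ∃ k, x + y = fv n k := by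
  rw [FQ, SimpleGraph.fromRel_adj]
  constructor
  · rintro ⟨hne, (⟨i, h⟩ | h) | (⟨i, h⟩ | h)⟩
    · exact ⟨i.castSucc, by rw [fv_castSucc]; exact add_eq_iff.mp h⟩
    · exact ⟨Fin.last n, by rw [fv_last]; exact add_eq_iff.mp h⟩
    · exact ⟨i.castSucc, by rw [fv_castSucc, add_comm]; exact add_eq_iff.mp h⟩
    · exact ⟨Fin.last n, by rw [fv_last, add_comm]; exact add_eq_iff.mp h⟩
  · rintro ⟨k, hk⟩
    refine ⟨?_, Or.inl ?_⟩
    · rintro rfl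
      rw [two_eq_zero] at hk
      exact fv_ne_zero hn k hk.symm
    · induction k using Fin.lastCases with
      | last => right; rw [fv_last] at hk; exact add_eq_iff.mpr hk
      | cast i => left; exact ⟨i, add_eq_iff.mpr (by rw [← fv_castSucc i]; exact hk)⟩

lemma exists_coord_notin3 (hn : 3 < n) (i j l : Fin n) :
    ∃ m : Fin n, m ≠ i ∧ m ≠ j ∧ m ≠ l := by
  by_contra h
  push_neg at h
  have hsub : (Finset.univ : Finset (Fin n)) ⊆ {i, j, l} := by
    intro m _
    simp only [Finset.mem_insert, Finset.mem_singleton]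
    by_contra hm
    push_neg at hm
    exact hm.2.2 (h m hm.1 hm.2.1)
  have hc := Finset.card_le_card hsub
  have h3 : ({i, j, l} : Finset (Fin n)).card ≤ 3 := by
    apply le_trans (Finset.card_insert_le _ _)
    apply Nat.succ_le_succ
    apply le_trans (Finset.card_insert_le _ _)
    simp
  rw [Finset.card_univ, Fintype.card_fin] at hc
  omega

lemma three_single_ne_one (hn : 3 < n) (i j l : Fin n) :
    (Pi.single i 1 : V n) + Pi.single j 1 + Pi.single l 1 ≠ 1 := by
  obtain ⟨m, hmi, hmj, hml⟩ := exists_coord_notin3 hn i j l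
  intro h
  have := congrFun h m
  rw [Pi.add_apply, Pi.add_apply, Pi.single_eq_of_ne hmi, Pi.single_eq_of_ne hmj,
    Pi.single_eq_of_ne hml] at this
  simp at this

lemma two_single_ne_one (hn : 3 < n) (i j : Fin n) :
    (Pi.single i 1 : V n) + Pi.single j 1 ≠ 1 := by
  obtain ⟨m, hmi, hmj, -⟩ := exists_coord_notin3 hn i j i
  intro h
  have := congrFun h m
  rw [Pi.add_apply, Pi.single_eq_of_ne hmi, Pi.single_eq_of_ne hmj] at this
  simp at this

lemma one_add_single_ne (hn : 3 < n) (j k l : Fin n) :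
    (1 : V n) + Pi.single j 1 ≠ Pi.single k 1 + Pi.single l 1 := by
  intro h
  apply three_single_ne_one hn k l j
  have := congrArg (fun z => z + Pi.single j (1 : ZMod 2)) h
  try simp only at this
  rw [add_assoc, two_eq_zero, add_zero] at this
  exact this.symm

lemma single_add_single {i j k l : Fin n} (hij : i ≠ j) (hkl : k ≠ l)
    (h : (Pi.single i 1 : V n) + Pi.single j 1 = Pi.single k 1 + Pi.single l 1) :
    (i = k ∧ j = l) ∨ (i = l ∧ j = k) := by
  by_cases hik : i = k
  · subst hik
    left
    exact ⟨rfl, single_injective (add_left_cancel h)⟩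
  · have hil : i = l := by
      by_contra hil
      have hi := congrFun h i
      rw [Pi.add_apply, Pi.add_apply, Pi.single_eq_same, Pi.single_eq_of_ne hij,
        Pi.single_eq_of_ne hik, Pi.single_eq_of_ne hil] at hi
      simp at hi
    subst hil
    right
    refine ⟨rfl, ?_⟩
    have h' : (Pi.single i 1 : V n) + Pi.single j 1 = Pi.single i 1 + Pi.single k 1 := by
      rw [h, add_comm]
    exact single_injective (add_left_cancel h')

lemma fv_foursum (hn : 3 < n) {a b c d : Fin (n+1)} (hab : a ≠ b) (hcd : c ≠ d)
    (h : fv n a + fv n b = fv n c + fv n d) : (a = c ∧ b = d) ∨ (a = d ∧ b = c) := by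
  rcases Fin.eq_castSucc_or_eq_last a with ⟨i, rfl⟩ | rfl <;>
    rcases Fin.eq_castSucc_or_eq_last b with ⟨j, rfl⟩ | rfl <;>
    rcases Fin.eq_castSucc_or_eq_last c with ⟨k, rfl⟩ | rfl <;>
    rcases Fin.eq_castSucc_or_eq_last d with ⟨l, rfl⟩ | rfl <;>
    simp only [fv_castSucc, fv_last] at h
  -- a=ci, b=cj, c=ck, d=cl
  · have hij : i ≠ j := fun hh => hab (congrArg Fin.castSucc hh)
    have hkl : k ≠ l := fun hh => hcd (congrArg Fin.castSucc hh)
    rcases single_add_single hij hkl h with ⟨h1, h2⟩ | ⟨h1, h2⟩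
    · exact Or.inl ⟨congrArg Fin.castSucc h1, congrArg Fin.castSucc h2⟩
    · exact Or.inr ⟨congrArg Fin.castSucc h1, congrArg Fin.castSucc h2⟩
  -- a=ci, b=cj, c=ck, d=last
  · exfalso
    have h' : (Pi.single i 1 : V n) + Pi.single j 1 = 1 + Pi.single k 1 := by
      rw [h, add_comm]
    exact one_add_single_ne hn k i j h'.symm
  -- a=ci, b=cj, c=last, d=cl
  · exact absurd h.symm (one_add_single_ne hn l i j)
  -- a=ci, b=cj, c=last, d=last
  · exact absurd rfl hcd
  -- a=ci, b=last, c=ck, d=cl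
  · exfalso
    have h' : (1 : V n) + Pi.single i 1 = Pi.single k 1 + Pi.single l 1 := by
      rw [← h, add_comm]
    exact one_add_single_ne hn i k l h'
  -- a=ci, b=last, c=ck, d=last
  · exact Or.inl ⟨congrArg Fin.castSucc (single_injective (add_right_cancel h)), rfl⟩
  -- a=ci, b=last, c=last, d=cl
  · have h' : (Pi.single i 1 : V n) + 1 = Pi.single l 1 + 1 := by rw [h, add_comm]
    exact Or.inr ⟨congrArg Fin.castSucc (single_injective (add_right_cancel h')), rfl⟩
  -- a=ci, b=last, c=last, d=last
  · exact absurd rfl hcd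
  -- a=last, b=cj, c=ck, d=cl
  · exact absurd h (one_add_single_ne hn j k l)
  -- a=last, b=cj, c=ck, d=last
  · have h' : (Pi.single j 1 : V n) + 1 = Pi.single k 1 + 1 := by rw [← h, add_comm]
    exact Or.inr ⟨rfl, congrArg Fin.castSucc (single_injective (add_right_cancel h'))⟩
  -- a=last, b=cj, c=last, d=cl
  · exact Or.inl ⟨rfl, congrArg Fin.castSucc (single_injective (add_left_cancel h))⟩
  -- a=last, b=cj, c=last, d=last
  · exact absurd rfl hcd
  -- a=last, b=last (4 cases)
  · exact absurd rfl hab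
  · exact absurd rfl hab
  · exact absurd rfl hab
  · exact absurd rfl hab

lemma fv_add_fv_ne (hn : 3 < n) {a b c : Fin (n+1)} (hab : a ≠ b) :
    fv n a + fv n b ≠ fv n c := by
  intro h
  rcases Fin.eq_castSucc_or_eq_last a with ⟨i, rfl⟩ | rfl <;>
    rcases Fin.eq_castSucc_or_eq_last b with ⟨j, rfl⟩ | rfl <;>
    rcases Fin.eq_castSucc_or_eq_last c with ⟨k, rfl⟩ | rfl <;>
    simp only [fv_castSucc, fv_last] at h
  -- a=ci, b=cj, c=ck
  · have hij : i ≠ j := fun hh => hab (congrArg Fin.castSucc hh)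
    by_cases hik : i = k
    · subst hik
      have h' : (Pi.single i 1 : V n) + Pi.single j 1 = Pi.single i 1 + 0 := by
        rw [h, add_zero]
      exact single_ne_zero j (add_left_cancel h')
    · have hi := congrFun h i
      rw [Pi.add_apply, Pi.single_eq_same, Pi.single_eq_of_ne hij,
        Pi.single_eq_of_ne hik] at hi
      simp at hi
  -- a=ci, b=cj, c=last
  · exact two_single_ne_one hn i j h
  -- a=ci, b=last, c=ck
  · have h' : (Pi.single i 1 : V n) + Pi.single k 1 = 1 := by
      rw [← h, ← add_assoc, two_eq_zero, zero_add]
    exact two_single_ne_one hn i k h'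
  -- a=ci, b=last, c=last
  · have h' : (Pi.single i 1 : V n) + 1 = 0 + 1 := by rw [h, zero_add]
    exact single_ne_zero i (add_right_cancel h')
  -- a=last, b=cj, c=ck
  · have h' : (Pi.single j 1 : V n) + Pi.single k 1 = 1 := by
      rw [← h, add_comm (1 : V n), ← add_assoc, two_eq_zero, zero_add]
    exact two_single_ne_one hn j k h'
  -- a=last, b=cj, c=last
  · have h' : (1 : V n) + Pi.single j 1 = 1 + 0 := by rw [h, add_zero]
    exact single_ne_zero j (add_left_cancel h')
  -- a=last, b=last
  · exact absurd rfl hab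
  · exact absurd rfl hab

lemma common_neighbor (hn : 3 < n) {x u : V n} {k m : Fin (n+1)} (hkm : k ≠ m)
    (h1 : (FQ n).Adj u (x + fv n k)) (h2 : (FQ n).Adj u (x + fv n m)) :
    u = x ∨ u = x + fv n k + fv n m := by
  have hn0 : 0 < n := by omega
  obtain ⟨a, ha⟩ := (adj_iff hn0).mp h1
  obtain ⟨b, hb⟩ := (adj_iff hn0).mp h2
  have ha' : u + x = fv n a + fv n k := by
    rw [← ha, add_assoc, add_assoc, two_eq_zero, add_zero]
  have hb' : u + x = fv n b + fv n m := by
    rw [← hb, add_assoc, add_assoc, two_eq_zero, add_zero]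
  by_cases hak : a = k
  · subst hak
    rw [two_eq_zero] at ha'
    exact Or.inl (eq_of_add_eq_zero ha')
  · by_cases hbm : b = m
    · subst hbm
      rw [two_eq_zero] at hb'
      exact Or.inl (eq_of_add_eq_zero hb')
    · rcases fv_foursum hn hak hbm (ha'.symm.trans hb') with ⟨-, hkm'⟩ | ⟨ham, -⟩
      · exact absurd hkm' hkm
      · subst ham
        right
        have hu : u = x + (fv n a + fv n k) := by
          rw [add_eq_iff, ← add_comm u x]
          exact ha'
        rw [hu, add_comm (fv n a), ← add_assoc]

lemma rigid (hn : 3 < n) (φ : FQ n ≃g FQ n) (h0 : φ 0 = 0)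
    (hS : ∀ k, φ (fv n k) = fv n k) : ∀ x, φ x = x := by
  have hn0 : 0 < n := by omega
  have hn1 : 1 < n := by omega
  set P : V n → Prop := fun x => φ x = x ∧ ∀ k, φ (x + fv n k) = x + fv n k with hP
  have step : ∀ x, P x → ∀ k, P (x + fv n k) := by
    intro x hx k
    refine ⟨hx.2 k, ?_⟩
    intro m
    by_cases hmk : m = k
    · subst hmk; rw [add_assoc, two_eq_zero, add_zero]; exact hx.1
    · have hkm : k ≠ m := fun h => hmk h.symm
      set z := x + fv n k + fv n m with hz
      have hne : z ≠ x := by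
        intro h
        rw [hz, add_assoc] at h
        have h' : x + (fv n k + fv n m) = x + 0 := by rw [h, add_zero]
        have h'' := eq_of_add_eq_zero (add_left_cancel h')
        exact hkm (fv_injective hn1 h'')
      have hz1 : (FQ n).Adj z (x + fv n k) := by
        apply (adj_iff hn0).mpr
        refine ⟨m, ?_⟩
        rw [hz, add_comm]
        exact add_cancel_left
      have hz2 : (FQ n).Adj z (x + fv n m) := by
        apply (adj_iff hn0).mpr
        refine ⟨k, ?_⟩
        have hz' : z = x + fv n m + fv n k := by
          rw [hz, add_assoc, add_comm (fv n k), ← add_assoc]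
        rw [hz', add_comm]
        exact add_cancel_left
      have hφ1 : (FQ n).Adj (φ z) (x + fv n k) := by
        have := φ.map_adj_iff.mpr hz1
        rwa [hx.2 k] at this
      have hφ2 : (FQ n).Adj (φ z) (x + fv n m) := by
        have := φ.map_adj_iff.mpr hz2
        rwa [hx.2 m] at this
      rcases common_neighbor hn hkm hφ1 hφ2 with h | h
      · exact absurd (φ.injective (h.trans hx.1.symm)) hne
      · exact h
  have main : ∀ (T : Finset (Fin n)) (x : V n), (∀ i, i ∉ T → x i = 0) → P x := by
    intro T
    induction T using Finset.induction_on with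
    | empty =>
      intro x hx
      have hx0 : x = 0 := funext fun i => hx i (Finset.notMem_empty i)
      subst hx0
      exact ⟨h0, fun k => by rw [zero_add]; exact hS k⟩
    | @insert a T ha IH =>
      intro x hx
      by_cases hxa : x a = 0
      · apply IH
        intro i hi
        by_cases hia : i = a
        · subst hia; exact hxa
        · exact hx i (by simp [hia, hi])
      · have hxa1 : x a = 1 := by
          rcases (by decide : ∀ c : ZMod 2, c = 0 ∨ c = 1) (x a) with h | h
          · exact absurd h hxa
          · exact h
        set x' := Function.update x a 0 with hx'def
        have hx'supp : ∀ i, i ∉ T → x' i = 0 := by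
          intro i hi
          by_cases hia : i = a
          · subst hia; simp [hx'def]
          · rw [hx'def, Function.update_of_ne hia]
            exact hx i (by simp [hia, hi])
        have hP' := IH x' hx'supp
        have hxeq : x = x' + Pi.single a 1 := by
          funext j
          by_cases hja : j = a
          · subst hja
            simp [hx'def, hxa1]
          · rw [Pi.add_apply, hx'def, Function.update_of_ne hja,
              Pi.single_eq_of_ne hja, add_zero]
        rw [hxeq, ← fv_castSucc]
        exact step x' hP' _
  intro x
  exact (main Finset.univ x (fun i hi => absurd (Finset.mem_univ i) hi)).1

def Lmap (σ : Equiv.Perm (Fin (n+1))) : V n →ₗ[ZMod 2] V n where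
  toFun x := ∑ i : Fin n, x i • fv n (σ i.castSucc)
  map_add' x y := by
    simp only [Pi.add_apply, add_smul]
    rw [Finset.sum_add_distrib]
  map_smul' c x := by
    simp only [Pi.smul_apply, smul_eq_mul, RingHom.id_apply, Finset.smul_sum, mul_smul]

lemma Lmap_apply (σ : Equiv.Perm (Fin (n+1))) (x : V n) :
    Lmap σ x = ∑ i : Fin n, x i • fv n (σ i.castSucc) := rfl

lemma Lmap_single (σ : Equiv.Perm (Fin (n+1))) (j : Fin n) :
    Lmap σ (Pi.single j 1) = fv n (σ j.castSucc) := by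
  rw [Lmap_apply, Finset.sum_eq_single j]
  · rw [Pi.single_eq_same, one_smul]
  · intro i _ hij
    rw [Pi.single_eq_of_ne hij, zero_smul]
  · intro h
    exact absurd (Finset.mem_univ j) h

lemma sum_single_one : ∑ i : Fin n, (Pi.single i 1 : V n) = 1 := by
  have := Finset.univ_sum_single (1 : V n)
  simpa using this

lemma sum_fv : ∑ k : Fin (n+1), fv n k = 0 := by
  rw [Fin.sum_univ_castSucc]
  simp only [fv_castSucc, fv_last]
  rw [sum_single_one]
  exact two_eq_zero 1

lemma Lmap_one_vec (σ : Equiv.Perm (Fin (n+1))) :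
    Lmap σ (1 : V n) = fv n (σ (Fin.last n)) := by
  have h : ∑ k : Fin (n+1), fv n (σ k) = 0 := by
    rw [Equiv.sum_comp σ (fv n)]
    exact sum_fv
  rw [Fin.sum_univ_castSucc] at h
  have h' := eq_of_add_eq_zero h
  rw [Lmap_apply]
  simp only [Pi.one_apply, one_smul]
  exact h'

lemma Lmap_fv (σ : Equiv.Perm (Fin (n+1))) (k : Fin (n+1)) :
    Lmap σ (fv n k) = fv n (σ k) := by
  induction k using Fin.lastCases with
  | last => rw [fv_last]; exact Lmap_one_vec σ
  | cast i => rw [fv_castSucc]; exact Lmap_single σ i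

lemma Lmap_comp (σ' σ : Equiv.Perm (Fin (n+1))) (x : V n) :
    Lmap σ' (Lmap σ x) = Lmap (σ' * σ) x := by
  rw [Lmap_apply σ x, map_sum]
  rw [Lmap_apply (σ' * σ) x]
  apply Finset.sum_congr rfl
  intro i _
  rw [map_smul, Lmap_fv, Equiv.Perm.mul_apply]

lemma Lmap_id (x : V n) : Lmap (1 : Equiv.Perm (Fin (n+1))) x = x := by
  rw [Lmap_apply]
  simp only [Equiv.Perm.one_apply, fv_castSucc]
  have : ∀ i : Fin n, x i • (Pi.single i 1 : V n) = Pi.single i (x i) := by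
    intro i
    rw [← Pi.single_smul, smul_eq_mul, mul_one]
  simp only [this]
  exact Finset.univ_sum_single x

def Lequiv (σ : Equiv.Perm (Fin (n+1))) : V n ≃ V n where
  toFun := Lmap σ
  invFun := Lmap σ⁻¹
  left_inv x := by rw [Lmap_comp, inv_mul_cancel, Lmap_id]
  right_inv x := by rw [Lmap_comp, mul_inv_cancel, Lmap_id]

def Liso (hn : 0 < n) (σ : Equiv.Perm (Fin (n+1))) : FQ n ≃g FQ n where
  toEquiv := Lequiv σ
  map_rel_iff' := by
    intro a b
    simp only [Lequiv, Equiv.coe_fn_mk]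
    rw [adj_iff hn, adj_iff hn]
    constructor
    · rintro ⟨k, hk⟩
      refine ⟨σ⁻¹ k, ?_⟩
      have : Lmap σ⁻¹ (Lmap σ a + Lmap σ b) = Lmap σ⁻¹ (fv n k) := by rw [hk]
      rw [← map_add, Lmap_comp, inv_mul_cancel, Lmap_id, Lmap_fv] at this
      exact this
    · rintro ⟨k, hk⟩
      refine ⟨σ k, ?_⟩
      rw [← map_add, hk, Lmap_fv]

def Tiso (v : V n) : FQ n ≃g FQ n where
  toEquiv := Equiv.addRight v
  map_rel_iff' := by
    intro a b
    simp only [Equiv.coe_addRight]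
    by_cases hn0 : 0 < n
    · rw [adj_iff hn0, adj_iff hn0]
      have : a + v + (b + v) = a + b := by
        have h1 : a + v + (b + v) = a + b + (v + v) := by abel
        rw [h1, two_eq_zero, add_zero]
      rw [this]
    · constructor <;> intro h <;>
      · exfalso
        have : n = 0 := by omega
        subst this
        have := h.ne
        apply this
        funext j
        exact absurd j.2 (by omega)

end FQaux

open FQaux in
theorem fq_aut_card (n : ℕ) (hn : 3 < n) :
    Nat.card (FQ n ≃g FQ n) = (n + 1).factorial * 2 ^ n := by
  classical
  have hn0 : 0 < n := by omega
  have hn1 : 1 < n := by omega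
  set Θ : V n × Equiv.Perm (Fin (n+1)) → (FQ n ≃g FQ n) :=
    fun p => (Liso hn0 p.2).trans (Tiso p.1) with hΘ
  have Θ_apply : ∀ (v : V n) (σ : Equiv.Perm (Fin (n+1))) (x : V n),
      Θ (v, σ) x = Lmap σ x + v := fun _ _ _ => rfl
  have hinj : Function.Injective Θ := by
    rintro ⟨v, σ⟩ ⟨w, τ⟩ h
    have h0 : Θ (v, σ) 0 = Θ (w, τ) 0 := by rw [h]
    rw [Θ_apply, Θ_apply] at h0
    simp only [map_zero, zero_add] at h0
    have hσ : σ = τ := by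
      apply Equiv.ext
      intro k
      have hk : Θ (v, σ) (fv n k) = Θ (w, τ) (fv n k) := by rw [h]
      rw [Θ_apply, Θ_apply, Lmap_fv, Lmap_fv, h0] at hk
      exact fv_injective hn1 (add_right_cancel hk)
    rw [h0, hσ]
  have hsurj : Function.Surjective Θ := by
    intro φ
    set v := φ 0 with hv
    have hadj : ∀ k, ∃ l, φ (fv n k) + v = fv n l := by
      intro k
      have h1 : (FQ n).Adj 0 (fv n k) := (adj_iff hn0).mpr ⟨k, by rw [zero_add]⟩
      have h2 := φ.map_adj_iff.mpr h1
      obtain ⟨l, hl⟩ := (adj_iff hn0).mp h2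
      exact ⟨l, by rw [add_comm, hv]; exact hl⟩
    choose σ0 hσ0 using hadj
    have hσ0inj : Function.Injective σ0 := by
      intro k k' hkk
      have hh : φ (fv n k) + v = φ (fv n k') + v := by rw [hσ0, hσ0, hkk]
      exact fv_injective hn1 (φ.injective (add_right_cancel hh))
    have hσ0bij := Finite.injective_iff_bijective.mp hσ0inj
    set σ := Equiv.ofBijective σ0 hσ0bij with hσdef
    refine ⟨(v, σ), ?_⟩
    have hΘfv : ∀ k, Θ (v, σ) (fv n k) = φ (fv n k) := by
      intro k
      rw [Θ_apply, Lmap_fv]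
      have hσk : σ k = σ0 k := rfl
      rw [hσk, ← hσ0 k, add_assoc, two_eq_zero, add_zero]
    have hΘ0 : Θ (v, σ) 0 = φ 0 := by
      rw [Θ_apply, map_zero, zero_add, hv]
    set ρ := φ.trans (Θ (v, σ)).symm with hρdef
    have hρ0 : ρ 0 = 0 := by
      have : ρ 0 = (Θ (v, σ)).symm (φ 0) := rfl
      rw [this, ← hΘ0]
      exact (Θ (v, σ)).symm_apply_apply 0
    have hρS : ∀ k, ρ (fv n k) = fv n k := by
      intro k
      have : ρ (fv n k) = (Θ (v, σ)).symm (φ (fv n k)) := rfl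
      rw [this, ← hΘfv k]
      exact (Θ (v, σ)).symm_apply_apply _
    have hfix := rigid hn ρ hρ0 hρS
    have key : ∀ x, Θ (v, σ) x = φ x := by
      intro x
      have h1 := hfix x
      have h2 : ρ x = (Θ (v, σ)).symm (φ x) := rfl
      rw [h2] at h1
      have h3 := congrArg (Θ (v, σ)) h1
      rw [(Θ (v, σ)).apply_symm_apply] at h3
      exact h3.symm
    exact RelIso.ext fun x => key x
  have hcard := Nat.card_eq_of_bijective Θ ⟨hinj, hsurj⟩
  rw [← hcard, Nat.card_prod]
  have h1 : Nat.card (V n) = 2 ^ n := by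
    rw [Nat.card_eq_fintype_card, Fintype.card_fun, ZMod.card, Fintype.card_fin]
  have h2 : Nat.card (Equiv.Perm (Fin (n+1))) = (n+1).factorial := by
    rw [Nat.card_eq_fintype_card, Fintype.card_perm, Fintype.card_fin]
  rw [h1, h2, Nat.mul_comm]
end
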